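/- If f is adaptive monotone and adaptive submodular, and the randomized policy π^ag is an expected α_i-approximate greedy policy at each round i = 1,...,r, then E_ω[f_avg(π^ag(ω))] ≥ (1 − e^{−α}) · E_ω[f_avg(π*(ω))] for every randomized policy π* selecting at most r items, where α = (1/r)Σ_{i=1}^r α_i. -/

import Mathlib

open Finset
open scoped Classical

section Adaptive

variable {E O : Type*} [Fintype E] [Fintype O] [DecidableEq E] [Nonempty E]

/-- A partial realization: a partial assignment of states to items. -/
abbrev PReal (E O : Type*) := E → Option O

/-- A (full) realization `φ` is consistent with a partial realization `ψ`
(written `φ ∼ ψ`) if `φ` agrees with `ψ` on the domain of `ψ`. -/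
def consistentR (φ : E → O) (ψ : PReal E O) : Prop := ∀ e o, ψ e = some o → φ e = o

/-- The domain of a partial realization, i.e. the set of items already selected. -/
noncomputable def pdom (ψ : PReal E O) : Finset E :=
  Finset.univ.filter fun e => (ψ e).isSome

/-- The probability `Pr[Φ ∼ ψ]` that the random realization is consistent with `ψ`. -/
noncomputable def prMass (p : (E → O) → ℝ) (ψ : PReal E O) : ℝ :=
  ∑ φ ∈ Finset.univ.filter (fun φ => consistentR φ ψ), p φ

/-- The conditional expected marginal benefit `Δ(e | ψ)` of item `e` given the
partial realization `ψ`. -/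
noncomputable def marginal (p : (E → O) → ℝ) (f : Finset E → (E → O) → ℝ)
    (e : E) (ψ : PReal E O) : ℝ :=
  (∑ φ ∈ Finset.univ.filter (fun φ => consistentR φ ψ),
      p φ * (f (insert e (pdom ψ)) φ - f (pdom ψ) φ)) / prMass p ψ

/-- `max_e Δ(e | ψ)`, the best single-item conditional marginal benefit. -/
noncomputable def maxMarginal (p : (E → O) → ℝ) (f : Finset E → (E → O) → ℝ)
    (ψ : PReal E O) : ℝ :=
  Finset.univ.sup' Finset.univ_nonempty (fun e => marginal p f e ψ)

/-- Adaptive monotonicity: `Δ(e | ψ) ≥ 0` for every `e` and every `ψ` with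
`Pr[Φ ∼ ψ] > 0`. -/
def AdaptiveMonotone (p : (E → O) → ℝ) (f : Finset E → (E → O) → ℝ) : Prop :=
  ∀ ψ : PReal E O, 0 < prMass p ψ → ∀ e : E, 0 ≤ marginal p f e ψ

/-- `ψ` is a subrealization of `ψ'`. -/
def subreal (ψ ψ' : PReal E O) : Prop := ∀ e o, ψ e = some o → ψ' e = some o

/-- Adaptive submodularity: `Δ(e | ψ) ≥ Δ(e | ψ')` whenever `ψ ⊆ ψ'` and
`e ∉ dom(ψ')`. -/
def AdaptiveSubmodular (p : (E → O) → ℝ) (f : Finset E → (E → O) → ℝ) : Prop :=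
  ∀ ψ ψ' : PReal E O, subreal ψ ψ' → ∀ e ∉ pdom ψ', marginal p f e ψ' ≤ marginal p f e ψ

/-- A deterministic adaptive policy: picks the next item from the current
partial realization. -/
abbrev Policy (E O : Type*) := PReal E O → E

/-- `runP π φ i = Ψ_i(π, φ)`: the partial realization observed after policy `π`
selects its first `i` items under realization `φ`. -/
noncomputable def runP (π : Policy E O) (φ : E → O) : ℕ → PReal E O
  | 0 => fun _ => none
  | (i + 1) =>
      Function.update (runP π φ i) (π (runP π φ i)) (some (φ (π (runP π φ i))))

/-- `favg p f π i = f_avg(π_i)`: the expected utility of the truncated policy `π_i`. -/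
noncomputable def favg (p : (E → O) → ℝ) (f : Finset E → (E → O) → ℝ)
    (π : Policy E O) (i : ℕ) : ℝ :=
  ∑ φ : E → O, p φ * f (pdom (runP π φ i)) φ

end Adaptive

set_option linter.unusedSectionVars false
set_option linter.unusedVariables false

section AuxProof

variable {E O : Type*} [Fintype E] [Fintype O] [DecidableEq E] [Nonempty E]

lemma pdom_update (ψ : PReal E O) (e : E) (o : O) :
    pdom (Function.update ψ e (some o)) = insert e (pdom ψ) := by
  ext x
  by_cases hx : x = e
  · subst hx; simp [pdom]
  · simp [pdom, Function.update_of_ne hx, hx]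

lemma consistentR_of_subreal {φ : E → O} {ψ ψ' : PReal E O} (h : subreal ψ ψ')
    (hc : consistentR φ ψ') : consistentR φ ψ := fun e o he => hc e o (h e o he)

lemma runP_consistent (π : Policy E O) (φ : E → O) : ∀ i, consistentR φ (runP π φ i)
  | 0 => fun e o h => by simp [runP] at h
  | (i+1) => by
      intro e o h
      rw [runP] at h
      rcases eq_or_ne e (π (runP π φ i)) with he | he
      · rw [he, Function.update_self] at h
        rw [he]; exact (Option.some_inj.mp h)
      · rw [Function.update_of_ne he] at h
        exact runP_consistent π φ i e o h

lemma runP_subreal_succ (π : Policy E O) (φ : E → O) (i : ℕ) :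
    subreal (runP π φ i) (runP π φ (i+1)) := by
  intro e o h
  rw [runP]
  rcases eq_or_ne e (π (runP π φ i)) with he | he
  · rw [← he, Function.update_self]
    exact congrArg some (runP_consistent π φ i e o h)
  · rw [Function.update_of_ne he]; exact h

lemma runP_det (π : Policy E O) {φ φ' : E → O} :
    ∀ i, consistentR φ' (runP π φ i) → runP π φ' i = runP π φ i
  | 0, _ => rfl
  | (i+1), h => by
      have h' : consistentR φ' (runP π φ i) :=
        consistentR_of_subreal (runP_subreal_succ π φ i) h
      have hi := runP_det π i h'
      have he : φ' (π (runP π φ i)) = φ (π (runP π φ i)) :=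
        h _ _ (by rw [runP, Function.update_self])
      rw [runP, runP, hi, he]

lemma prMass_nonneg {p : (E → O) → ℝ} (hp : ∀ φ, 0 ≤ p φ) (ψ : PReal E O) :
    0 ≤ prMass p ψ := Finset.sum_nonneg fun φ _ => hp φ

lemma prMass_mono {p : (E → O) → ℝ} (hp : ∀ φ, 0 ≤ p φ) {ψ ψ' : PReal E O}
    (h : subreal ψ ψ') : prMass p ψ' ≤ prMass p ψ := by
  apply Finset.sum_le_sum_of_subset_of_nonneg
  · intro φ hφ
    simp only [Finset.mem_filter, Finset.mem_univ, true_and] at *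
    exact consistentR_of_subreal h hφ
  · exact fun φ _ _ => hp φ

lemma sum_consistent_eq {p : (E → O) → ℝ} (hp : ∀ φ, 0 ≤ p φ)
    (f : Finset E → (E → O) → ℝ) (e : E) (ψ : PReal E O) :
    ∑ φ ∈ Finset.univ.filter (fun φ => consistentR φ ψ),
        p φ * (f (insert e (pdom ψ)) φ - f (pdom ψ) φ)
      = prMass p ψ * marginal p f e ψ := by
  rcases eq_or_lt_of_le (prMass_nonneg hp ψ) with h0 | hpos
  · have hz := (Finset.sum_eq_zero_iff_of_nonneg (fun φ _ => hp φ)).mp h0.symm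
    rw [← h0, zero_mul]
    exact Finset.sum_eq_zero fun φ hφ => by rw [hz φ hφ, zero_mul]
  · rw [marginal, mul_comm, div_mul_cancel₀ _ (ne_of_gt hpos)]

lemma marginal_le_maxMarginal (p : (E → O) → ℝ) (f : Finset E → (E → O) → ℝ)
    (e : E) (ψ : PReal E O) : marginal p f e ψ ≤ maxMarginal p f ψ := by
  rw [maxMarginal]; exact Finset.le_sup' (fun e => marginal p f e ψ) (Finset.mem_univ e)

lemma maxMarginal_nonneg {p : (E → O) → ℝ} {f : Finset E → (E → O) → ℝ}
    (hmono : AdaptiveMonotone p f) {ψ : PReal E O} (h : 0 < prMass p ψ) :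
    0 ≤ maxMarginal p f ψ :=
  le_trans (hmono ψ h (Classical.arbitrary E)) (marginal_le_maxMarginal ..)

lemma prMass_mul_marginal_nonneg {p : (E → O) → ℝ} {f : Finset E → (E → O) → ℝ}
    (hp : ∀ φ, 0 ≤ p φ) (hmono : AdaptiveMonotone p f) (e : E) (ψ : PReal E O) :
    0 ≤ prMass p ψ * marginal p f e ψ := by
  rcases eq_or_lt_of_le (prMass_nonneg hp ψ) with h0 | hpos
  · rw [← h0, zero_mul]
  · exact mul_nonneg hpos.le (hmono ψ hpos e)


noncomputable def punion (ψ ψ' : PReal E O) : PReal E O :=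
  fun e => match ψ e with | some o => some o | none => ψ' e

lemma punion_apply_left {ψ ψ' : PReal E O} {e : E} {o : O} (h : ψ e = some o) :
    punion ψ ψ' e = some o := by simp [punion, h]

lemma punion_apply_none {ψ ψ' : PReal E O} {e : E} (h : ψ e = none) :
    punion ψ ψ' e = ψ' e := by simp [punion, h]

lemma punion_none_left (ψ : PReal E O) : punion (fun _ => none) ψ = ψ :=
  funext fun e => by simp [punion]

lemma punion_none_right (ψ : PReal E O) : punion ψ (fun _ => none) = ψ :=
  funext fun e => by cases h : ψ e <;> simp [punion, h]

lemma subreal_punion_left (ψ ψ' : PReal E O) : subreal ψ (punion ψ ψ') :=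
  fun _ _ h => punion_apply_left h

lemma subreal_punion_right {φ : E → O} {ψ ψ' : PReal E O}
    (h1 : consistentR φ ψ) (h2 : consistentR φ ψ') : subreal ψ' (punion ψ ψ') := by
  intro e o h
  cases hψ : ψ e with
  | none => rw [punion_apply_none hψ]; exact h
  | some o' =>
      rw [punion_apply_left hψ]
      exact congrArg some ((h1 e o' hψ).symm.trans (h2 e o h))

lemma consistentR_punion {φ : E → O} {ψ ψ' : PReal E O}
    (h1 : consistentR φ ψ) (h2 : consistentR φ ψ') : consistentR φ (punion ψ ψ') := by
  intro e o h
  cases hψ : ψ e with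
  | none => exact h2 e o (by rwa [punion_apply_none hψ] at h)
  | some o' =>
      rw [punion_apply_left hψ] at h
      exact (h1 e o' hψ).trans (Option.some_inj.mp h)

lemma punion_update_left (ψ ψ' : PReal E O) (e : E) (o : O) :
    punion (Function.update ψ e (some o)) ψ' = Function.update (punion ψ ψ') e (some o) := by
  funext x
  rcases eq_or_ne x e with rfl | hx
  · rw [Function.update_self]
    exact punion_apply_left (Function.update_self ..)
  · rw [Function.update_of_ne hx]
    cases h : ψ x with
    | none => rw [punion_apply_none h, punion_apply_none (by rw [Function.update_of_ne hx, h])]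
    | some o' => rw [punion_apply_left h, punion_apply_left (by rw [Function.update_of_ne hx, h])]

lemma punion_update_right {φ : E → O} {ψ : PReal E O} (h1 : consistentR φ ψ)
    (ψ' : PReal E O) (e : E) :
    punion ψ (Function.update ψ' e (some (φ e)))
      = Function.update (punion ψ ψ') e (some (φ e)) := by
  funext x
  rcases eq_or_ne x e with rfl | hx
  · rw [Function.update_self]
    cases h : ψ x with
    | none => rw [punion_apply_none h, Function.update_self]
    | some o => rw [punion_apply_left h, h1 x o h]
  · rw [Function.update_of_ne hx]
    cases h : ψ x with
    | none => rw [punion_apply_none h, punion_apply_none h, Function.update_of_ne hx]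
    | some o => rw [punion_apply_left h, punion_apply_left h]


lemma fiber_eq_consistent {g : (E → O) → PReal E O}
    (hc : ∀ φ, consistentR φ (g φ))
    (hd : ∀ φ φ', consistentR φ' (g φ) → g φ' = g φ) (φ₀ : E → O) :
    (Finset.univ.filter fun φ => g φ = g φ₀)
      = Finset.univ.filter fun φ => consistentR φ (g φ₀) := by
  ext φ
  simp only [Finset.mem_filter, Finset.mem_univ, true_and]
  exact ⟨fun h => h ▸ hc φ, fun h => hd φ₀ φ h⟩

lemma fiber_sum_eq {p : (E → O) → ℝ} (hp : ∀ φ, 0 ≤ p φ) (f : Finset E → (E → O) → ℝ)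
    {g : (E → O) → PReal E O} {sel : (E → O) → E}
    (hc : ∀ φ, consistentR φ (g φ))
    (hd : ∀ φ φ', consistentR φ' (g φ) → g φ' = g φ)
    (hs : ∀ φ φ', consistentR φ' (g φ) → sel φ' = sel φ)
    (φ₀ : E → O) :
    ∑ φ ∈ Finset.univ.filter (fun φ => g φ = g φ₀),
        p φ * (f (pdom (Function.update (g φ) (sel φ) (some (φ (sel φ))))) φ
          - f (pdom (g φ)) φ)
      = prMass p (g φ₀) * marginal p f (sel φ₀) (g φ₀) := by
  rw [← sum_consistent_eq hp f (sel φ₀) (g φ₀), ← fiber_eq_consistent hc hd φ₀]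
  apply Finset.sum_congr rfl
  intro φ hφ
  simp only [Finset.mem_filter, Finset.mem_univ, true_and] at hφ
  have hcons : consistentR φ (g φ₀) := hφ ▸ hc φ
  rw [hφ, hs φ₀ φ hcons, pdom_update]

/-- Generic step decomposition with bound. -/
lemma step_le {p : (E → O) → ℝ} (hp : ∀ φ, 0 ≤ p φ) (f : Finset E → (E → O) → ℝ)
    {g : (E → O) → PReal E O} {sel : (E → O) → E}
    (hc : ∀ φ, consistentR φ (g φ))
    (hd : ∀ φ φ', consistentR φ' (g φ) → g φ' = g φ)
    (hs : ∀ φ φ', consistentR φ' (g φ) → sel φ' = sel φ)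
    (bound : (E → O) → ℝ)
    (hb : ∀ φ φ', consistentR φ' (g φ) → bound φ' = bound φ)
    (hkey : ∀ φ₀, prMass p (g φ₀) * marginal p f (sel φ₀) (g φ₀)
        ≤ prMass p (g φ₀) * bound φ₀) :
    ∑ φ : E → O, p φ * (f (pdom (Function.update (g φ) (sel φ) (some (φ (sel φ))))) φ
        - f (pdom (g φ)) φ)
      ≤ ∑ φ : E → O, p φ * bound φ := by
  rw [← Finset.sum_fiberwise Finset.univ g
      (fun φ => p φ * (f (pdom (Function.update (g φ) (sel φ) (some (φ (sel φ))))) φ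
        - f (pdom (g φ)) φ)),
    ← Finset.sum_fiberwise Finset.univ g (fun φ => p φ * bound φ)]
  apply Finset.sum_le_sum
  intro ψ _
  by_cases hne : (Finset.univ.filter fun φ => g φ = ψ).Nonempty
  · obtain ⟨φ₀, hφ₀⟩ := hne
    simp only [Finset.mem_filter, Finset.mem_univ, true_and] at hφ₀
    subst hφ₀
    rw [fiber_sum_eq hp f hc hd hs φ₀]
    have hrhs : ∑ φ ∈ Finset.univ.filter (fun φ => g φ = g φ₀), p φ * bound φ
        = prMass p (g φ₀) * bound φ₀ := by
      rw [prMass, Finset.sum_mul, ← fiber_eq_consistent hc hd φ₀]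
      apply Finset.sum_congr rfl
      intro φ hφ
      simp only [Finset.mem_filter, Finset.mem_univ, true_and] at hφ
      rw [hb φ₀ φ (hφ ▸ hc φ)]
    rw [hrhs]
    exact hkey φ₀
  · rw [Finset.not_nonempty_iff_eq_empty] at hne
    rw [hne, Finset.sum_empty, Finset.sum_empty]


lemma step_nonneg {p : (E → O) → ℝ} (hp : ∀ φ, 0 ≤ p φ) {f : Finset E → (E → O) → ℝ}
    (hmono : AdaptiveMonotone p f)
    {g : (E → O) → PReal E O} {sel : (E → O) → E}
    (hc : ∀ φ, consistentR φ (g φ))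
    (hd : ∀ φ φ', consistentR φ' (g φ) → g φ' = g φ)
    (hs : ∀ φ φ', consistentR φ' (g φ) → sel φ' = sel φ) :
    0 ≤ ∑ φ : E → O,
        p φ * (f (pdom (Function.update (g φ) (sel φ) (some (φ (sel φ))))) φ
          - f (pdom (g φ)) φ) := by
  rw [← Finset.sum_fiberwise Finset.univ g
      (fun φ => p φ * (f (pdom (Function.update (g φ) (sel φ) (some (φ (sel φ))))) φ
        - f (pdom (g φ)) φ))]
  apply Finset.sum_nonneg
  intro ψ _
  by_cases hne : (Finset.univ.filter fun φ => g φ = ψ).Nonempty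
  · obtain ⟨φ₀, hφ₀⟩ := hne
    simp only [Finset.mem_filter, Finset.mem_univ, true_and] at hφ₀
    subst hφ₀
    rw [fiber_sum_eq hp f hc hd hs φ₀]
    exact prMass_mul_marginal_nonneg hp hmono _ _
  · rw [Finset.not_nonempty_iff_eq_empty] at hne
    rw [hne, Finset.sum_empty]

lemma stepA {p : (E → O) → ℝ} (hp : ∀ φ, 0 ≤ p φ) {f : Finset E → (E → O) → ℝ}
    (hmono : AdaptiveMonotone p f) (π πs : Policy E O) (j b : ℕ) :
    (∑ φ : E → O, p φ * f (pdom (punion (runP π φ j) (runP πs φ b))) φ)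
      ≤ ∑ φ : E → O, p φ * f (pdom (punion (runP π φ (j+1)) (runP πs φ b))) φ := by
  set g : (E → O) → PReal E O := fun φ => punion (runP π φ j) (runP πs φ b) with hg
  set sel : (E → O) → E := fun φ => π (runP π φ j) with hsel
  have hc : ∀ φ, consistentR φ (g φ) := fun φ =>
    consistentR_punion (runP_consistent π φ j) (runP_consistent πs φ b)
  have hdπ : ∀ φ φ', consistentR φ' (g φ) → runP π φ' j = runP π φ j := fun φ φ' h =>
    runP_det π j (consistentR_of_subreal (subreal_punion_left _ _) h)
  have hdπs : ∀ φ φ', consistentR φ' (g φ) → runP πs φ' b = runP πs φ b := fun φ φ' h =>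
    runP_det πs b (consistentR_of_subreal
      (subreal_punion_right (runP_consistent π φ j) (runP_consistent πs φ b)) h)
  have hd : ∀ φ φ', consistentR φ' (g φ) → g φ' = g φ := fun φ φ' h => by
    simp only [hg]; rw [hdπ φ φ' h, hdπs φ φ' h]
  have hs : ∀ φ φ', consistentR φ' (g φ) → sel φ' = sel φ := fun φ φ' h => by
    simp only [hsel]; rw [hdπ φ φ' h]
  have hupd : ∀ φ, punion (runP π φ (j+1)) (runP πs φ b)
      = Function.update (g φ) (sel φ) (some (φ (sel φ))) := fun φ => by
    simp only [hg, hsel]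
    rw [runP, punion_update_left]
  rw [← sub_nonneg, ← Finset.sum_sub_distrib]
  have := step_nonneg hp hmono hc hd hs
  calc (0:ℝ) ≤ _ := this
    _ = _ := by
        apply Finset.sum_congr rfl
        intro φ _
        rw [← hupd φ, mul_sub]

lemma stepB {p : (E → O) → ℝ} (hp : ∀ φ, 0 ≤ p φ) {f : Finset E → (E → O) → ℝ}
    (hmono : AdaptiveMonotone p f) (hsub : AdaptiveSubmodular p f)
    (π πs : Policy E O) (i k : ℕ) :
    (∑ φ : E → O, p φ * f (pdom (punion (runP π φ i) (runP πs φ (k+1)))) φ)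
      ≤ (∑ φ : E → O, p φ * f (pdom (punion (runP π φ i) (runP πs φ k))) φ)
        + ∑ φ : E → O, p φ * maxMarginal p f (runP π φ i) := by
  set g : (E → O) → PReal E O := fun φ => punion (runP π φ i) (runP πs φ k) with hg
  set sel : (E → O) → E := fun φ => πs (runP πs φ k) with hsel
  have hc : ∀ φ, consistentR φ (g φ) := fun φ =>
    consistentR_punion (runP_consistent π φ i) (runP_consistent πs φ k)
  have hdπ : ∀ φ φ', consistentR φ' (g φ) → runP π φ' i = runP π φ i := fun φ φ' h =>
    runP_det π i (consistentR_of_subreal (subreal_punion_left _ _) h)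
  have hdπs : ∀ φ φ', consistentR φ' (g φ) → runP πs φ' k = runP πs φ k := fun φ φ' h =>
    runP_det πs k (consistentR_of_subreal
      (subreal_punion_right (runP_consistent π φ i) (runP_consistent πs φ k)) h)
  have hd : ∀ φ φ', consistentR φ' (g φ) → g φ' = g φ := fun φ φ' h => by
    simp only [hg]; rw [hdπ φ φ' h, hdπs φ φ' h]
  have hs : ∀ φ φ', consistentR φ' (g φ) → sel φ' = sel φ := fun φ φ' h => by
    simp only [hsel]; rw [hdπs φ φ' h]
  have hupd : ∀ φ, punion (runP π φ i) (runP πs φ (k+1))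
      = Function.update (g φ) (sel φ) (some (φ (sel φ))) := fun φ => by
    simp only [hg, hsel]
    rw [runP, punion_update_right (runP_consistent π φ i)]
  set bound : (E → O) → ℝ := fun φ => maxMarginal p f (runP π φ i) with hbound
  have hb : ∀ φ φ', consistentR φ' (g φ) → bound φ' = bound φ := fun φ φ' h => by
    simp only [hbound]; rw [hdπ φ φ' h]
  have hkey : ∀ φ₀, prMass p (g φ₀) * marginal p f (sel φ₀) (g φ₀)
      ≤ prMass p (g φ₀) * bound φ₀ := by
    intro φ₀
    rcases eq_or_lt_of_le (prMass_nonneg hp (g φ₀)) with h0 | hpos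
    · rw [← h0, zero_mul, zero_mul]
    · apply mul_le_mul_of_nonneg_left _ (prMass_nonneg hp (g φ₀))
      have hsr : subreal (runP π φ₀ i) (g φ₀) := subreal_punion_left _ _
      have hpos' : 0 < prMass p (runP π φ₀ i) := lt_of_lt_of_le hpos (prMass_mono hp hsr)
      by_cases he : sel φ₀ ∈ pdom (g φ₀)
      · have hzero : marginal p f (sel φ₀) (g φ₀) = 0 := by
          rw [marginal, Finset.insert_eq_self.mpr he]
          simp
        rw [hzero]
        exact maxMarginal_nonneg hmono hpos'
      · exact le_trans (hsub _ _ hsr _ he) (marginal_le_maxMarginal p f _ _)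
  have hstep := step_le hp f hc hd hs bound hb hkey
  have heq : ∀ φ : E → O, p φ * f (pdom (punion (runP π φ i) (runP πs φ (k+1)))) φ
      - p φ * f (pdom (g φ)) φ
      = p φ * (f (pdom (Function.update (g φ) (sel φ) (some (φ (sel φ))))) φ
          - f (pdom (g φ)) φ) := fun φ => by rw [← hupd φ, mul_sub]
  calc ∑ φ : E → O, p φ * f (pdom (punion (runP π φ i) (runP πs φ (k+1)))) φ
      = (∑ φ : E → O, p φ * f (pdom (g φ)) φ)
        + ∑ φ : E → O, p φ * (f (pdom (Function.update (g φ) (sel φ) (some (φ (sel φ))))) φ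
            - f (pdom (g φ)) φ) := by
        rw [← Finset.sum_add_distrib]
        apply Finset.sum_congr rfl
        intro φ _
        rw [← heq φ]; ring
    _ ≤ _ := by
        exact add_le_add le_rfl hstep

lemma keyB {p : (E → O) → ℝ} (hp : ∀ φ, 0 ≤ p φ) {f : Finset E → (E → O) → ℝ}
    (hmono : AdaptiveMonotone p f) (hsub : AdaptiveSubmodular p f)
    (π πs : Policy E O) (i n : ℕ) :
    favg p f πs n ≤ favg p f π i
      + n * ∑ φ : E → O, p φ * maxMarginal p f (runP π φ i) := by
  have hGA : ∀ j, (∑ φ : E → O, p φ * f (pdom (punion (runP π φ 0) (runP πs φ n))) φ)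
      ≤ ∑ φ : E → O, p φ * f (pdom (punion (runP π φ j) (runP πs φ n))) φ := by
    intro j
    induction j with
    | zero => exact le_refl _
    | succ j ih => exact le_trans ih (stepA hp hmono π πs j n)
  have hGB : ∀ k, (∑ φ : E → O, p φ * f (pdom (punion (runP π φ i) (runP πs φ k))) φ)
      ≤ (∑ φ : E → O, p φ * f (pdom (punion (runP π φ i) (runP πs φ 0))) φ)
        + k * ∑ φ : E → O, p φ * maxMarginal p f (runP π φ i) := by
    intro k
    induction k with
    | zero => simp
    | succ k ih =>
        have := stepB hp hmono hsub π πs i k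
        push_cast
        push_cast at ih
        linarith
  have h1 : favg p f πs n = ∑ φ : E → O, p φ * f (pdom (punion (runP π φ 0) (runP πs φ n))) φ := by
    apply Finset.sum_congr rfl
    intro φ _
    rw [show runP π φ 0 = (fun _ => none) from rfl, punion_none_left]
  have h2 : favg p f π i = ∑ φ : E → O, p φ * f (pdom (punion (runP π φ i) (runP πs φ 0))) φ := by
    apply Finset.sum_congr rfl
    intro φ _
    rw [show runP πs φ 0 = (fun _ => none) from rfl, punion_none_right]
  rw [h1, h2]
  exact le_trans (hGA i) (hGB n)


lemma gainGE {Ωr : Type*} [Fintype Ωr] [Nonempty O] {p : (E → O) → ℝ} (hp : ∀ φ, 0 ≤ p φ)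
    (f : Finset E → (E → O) → ℝ)
    (q : Ωr → ℝ) (hq : ∀ ω, 0 ≤ q ω) (Pag : Ωr → Policy E O) (j : ℕ) (a : ℝ)
    (hgr : ∀ φ : E → O, ∀ ψ : PReal E O,
      a * maxMarginal p f ψ
          * (∑ ω ∈ Finset.univ.filter (fun ω : Ωr => runP (Pag ω) φ j = ψ), q ω)
        ≤ ∑ ω ∈ Finset.univ.filter (fun ω : Ωr => runP (Pag ω) φ j = ψ),
            q ω * marginal p f (Pag ω ψ) ψ) :
    a * ∑ ω : Ωr, q ω * (∑ φ : E → O, p φ * maxMarginal p f (runP (Pag ω) φ j))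
      ≤ (∑ ω : Ωr, q ω * favg p f (Pag ω) (j+1)) - ∑ ω : Ωr, q ω * favg p f (Pag ω) j := by
  have hrepc : ∀ ψ : PReal E O,
      consistentR (fun e => (ψ e).getD (Classical.arbitrary O)) ψ := by
    intro ψ e o h; simp [h]
  set W : PReal E O → Finset Ωr := fun ψ =>
    Finset.univ.filter fun ω =>
      runP (Pag ω) (fun e => (ψ e).getD (Classical.arbitrary O)) j = ψ with hW
  have hfib : ∀ (ω : Ωr) (ψ : PReal E O), ω ∈ W ψ →
      (Finset.univ.filter fun φ => runP (Pag ω) φ j = ψ)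
        = Finset.univ.filter fun φ => consistentR φ ψ := by
    intro ω ψ hω
    simp only [hW, Finset.mem_filter, Finset.mem_univ, true_and] at hω
    have h := fiber_eq_consistent (g := fun φ => runP (Pag ω) φ j)
      (fun φ => runP_consistent _ _ _) (fun φ φ' h => runP_det _ _ h)
      (fun e => (ψ e).getD (Classical.arbitrary O))
    rw [hω] at h
    exact h
  have hfib0 : ∀ (ω : Ωr) (ψ : PReal E O), ω ∉ W ψ →
      (Finset.univ.filter fun φ => runP (Pag ω) φ j = ψ) = ∅ := by
    intro ω ψ hω
    rw [Finset.eq_empty_iff_forall_notMem]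
    intro φ₀ hφ₀
    simp only [Finset.mem_filter, Finset.mem_univ, true_and] at hφ₀
    apply hω
    simp only [hW, Finset.mem_filter, Finset.mem_univ, true_and]
    have hcrep : consistentR (fun e => (ψ e).getD (Classical.arbitrary O)) (runP (Pag ω) φ₀ j) :=
      hφ₀ ▸ hrepc ψ
    rw [runP_det _ _ hcrep, hφ₀]
  have hS : ∀ (ω : Ωr) (ψ : PReal E O), ω ∈ W ψ →
      (∑ φ ∈ Finset.univ.filter (fun φ => runP (Pag ω) φ j = ψ),
        p φ * (f (pdom (runP (Pag ω) φ (j+1))) φ - f (pdom (runP (Pag ω) φ j)) φ))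
      = prMass p ψ * marginal p f (Pag ω ψ) ψ := by
    intro ω ψ hω
    simp only [hW, Finset.mem_filter, Finset.mem_univ, true_and] at hω
    have hfs := fiber_sum_eq hp f (g := fun φ => runP (Pag ω) φ j)
      (sel := fun φ => Pag ω (runP (Pag ω) φ j))
      (fun φ => runP_consistent _ _ _) (fun φ φ' h => runP_det _ _ h)
      (fun φ φ' h => show Pag ω (runP (Pag ω) φ' j) = Pag ω (runP (Pag ω) φ j) from
        congrArg _ (runP_det _ _ h)) (fun e => (ψ e).getD (Classical.arbitrary O))
    rw [hω] at hfs
    rw [← hfs]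
    apply Finset.sum_congr rfl
    intro φ _
    rw [runP]
  have hT : ∀ (ω : Ωr) (ψ : PReal E O), ω ∈ W ψ →
      (∑ φ ∈ Finset.univ.filter (fun φ => runP (Pag ω) φ j = ψ),
        p φ * maxMarginal p f (runP (Pag ω) φ j))
      = prMass p ψ * maxMarginal p f ψ := by
    intro ω ψ hω
    have h1 : (∑ φ ∈ Finset.univ.filter (fun φ => runP (Pag ω) φ j = ψ),
        p φ * maxMarginal p f (runP (Pag ω) φ j))
        = ∑ φ ∈ Finset.univ.filter (fun φ => runP (Pag ω) φ j = ψ),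
            p φ * maxMarginal p f ψ := by
      apply Finset.sum_congr rfl
      intro φ hφ
      simp only [Finset.mem_filter, Finset.mem_univ, true_and] at hφ
      rw [hφ]
    rw [h1, ← Finset.sum_mul, hfib ω ψ hω, prMass]
  -- rewrite the RHS gain
  have hgain : (∑ ω : Ωr, q ω * favg p f (Pag ω) (j+1)) - (∑ ω : Ωr, q ω * favg p f (Pag ω) j)
      = ∑ ψ : PReal E O, ∑ ω : Ωr, q ω *
          ∑ φ ∈ Finset.univ.filter (fun φ => runP (Pag ω) φ j = ψ),
            p φ * (f (pdom (runP (Pag ω) φ (j+1))) φ - f (pdom (runP (Pag ω) φ j)) φ) := by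
    rw [Finset.sum_comm, ← Finset.sum_sub_distrib]
    apply Finset.sum_congr rfl
    intro ω _
    rw [← mul_sub, ← Finset.mul_sum]
    congr 1
    rw [favg, favg, ← Finset.sum_sub_distrib]
    rw [show (∑ φ : E → O, (p φ * f (pdom (runP (Pag ω) φ (j+1))) φ
          - p φ * f (pdom (runP (Pag ω) φ j)) φ))
        = ∑ φ : E → O, p φ * (f (pdom (runP (Pag ω) φ (j+1))) φ
            - f (pdom (runP (Pag ω) φ j)) φ) from
      Finset.sum_congr rfl fun φ _ => (mul_sub _ _ _).symm]
    rw [← Finset.sum_fiberwise Finset.univ (fun φ => runP (Pag ω) φ j)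
      (fun φ => p φ * (f (pdom (runP (Pag ω) φ (j+1))) φ - f (pdom (runP (Pag ω) φ j)) φ))]
  have hmax : (∑ ω : Ωr, q ω * (∑ φ : E → O, p φ * maxMarginal p f (runP (Pag ω) φ j)))
      = ∑ ψ : PReal E O, ∑ ω : Ωr, q ω *
          ∑ φ ∈ Finset.univ.filter (fun φ => runP (Pag ω) φ j = ψ),
            p φ * maxMarginal p f (runP (Pag ω) φ j) := by
    rw [Finset.sum_comm]
    apply Finset.sum_congr rfl
    intro ω _
    rw [← Finset.mul_sum]
    congr 1
    rw [← Finset.sum_fiberwise Finset.univ (fun φ => runP (Pag ω) φ j)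
      (fun φ => p φ * maxMarginal p f (runP (Pag ω) φ j))]
  rw [hgain, hmax, Finset.mul_sum]
  apply Finset.sum_le_sum
  intro ψ _
  -- restrict both sums to W ψ
  have hTs : (∑ ω : Ωr, q ω *
      ∑ φ ∈ Finset.univ.filter (fun φ => runP (Pag ω) φ j = ψ),
        p φ * maxMarginal p f (runP (Pag ω) φ j))
      = ∑ ω ∈ W ψ, q ω * (prMass p ψ * maxMarginal p f ψ) := by
    rw [← Finset.sum_subset (Finset.subset_univ (W ψ))]
    · exact Finset.sum_congr rfl fun ω hω => by rw [hT ω ψ hω]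
    · intro ω _ hω
      rw [hfib0 ω ψ hω, Finset.sum_empty, mul_zero]
  have hSs : (∑ ω : Ωr, q ω *
      ∑ φ ∈ Finset.univ.filter (fun φ => runP (Pag ω) φ j = ψ),
        p φ * (f (pdom (runP (Pag ω) φ (j+1))) φ - f (pdom (runP (Pag ω) φ j)) φ))
      = ∑ ω ∈ W ψ, q ω * (prMass p ψ * marginal p f (Pag ω ψ) ψ) := by
    rw [← Finset.sum_subset (Finset.subset_univ (W ψ))]
    · exact Finset.sum_congr rfl fun ω hω => by rw [hS ω ψ hω]
    · intro ω _ hω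
      rw [hfib0 ω ψ hω, Finset.sum_empty, mul_zero]
  rw [hTs, hSs]
  have hgr' := hgr (fun e => (ψ e).getD (Classical.arbitrary O)) ψ
  have h1 : (∑ ω ∈ W ψ, q ω * (prMass p ψ * maxMarginal p f ψ))
      = prMass p ψ * (maxMarginal p f ψ * ∑ ω ∈ W ψ, q ω) := by
    rw [Finset.mul_sum, Finset.mul_sum]
    exact Finset.sum_congr rfl fun ω _ => by ring
  have h2 : (∑ ω ∈ W ψ, q ω * (prMass p ψ * marginal p f (Pag ω ψ) ψ))
      = prMass p ψ * ∑ ω ∈ W ψ, q ω * marginal p f (Pag ω ψ) ψ := by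
    rw [Finset.mul_sum]
    exact Finset.sum_congr rfl fun ω _ => by ring
  rw [h1, h2, ← mul_assoc]
  calc a * prMass p ψ * (maxMarginal p f ψ * ∑ ω ∈ W ψ, q ω)
      = prMass p ψ * (a * maxMarginal p f ψ * ∑ ω ∈ W ψ, q ω) := by ring
    _ ≤ prMass p ψ * ∑ ω ∈ W ψ, q ω * marginal p f (Pag ω ψ) ψ :=
        mul_le_mul_of_nonneg_left hgr' (prMass_nonneg hp ψ)

end AuxProof


/-- (Theorem 1) If `f` is adaptive monotone and adaptive submodular and the randomized
policy `π^ag` is an expected `α_i`-approximate greedy policy at each round `i = 1, ..., r`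
(conditionally on the history), then
`E_ω[f_avg(π^ag(ω))] ≥ (1 − e^{−α})·E_ω[f_avg(π*(ω))]` for every randomized policy `π*`
selecting at most `r` items, where `α = (1/r) Σ_{i=1}^r α_i`. -/
theorem randomized_greedy_expected_approx {E O : Type*} [Fintype E] [Fintype O]
    [DecidableEq E] [Nonempty E] {Ωr Ωr' : Type*} [Fintype Ωr] [Fintype Ωr']
    (p : (E → O) → ℝ) (hp : ∀ φ, 0 ≤ p φ) (hp1 : ∑ φ : E → O, p φ = 1)
    (f : Finset E → (E → O) → ℝ) (hf : ∀ S φ, 0 ≤ f S φ)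
    (hmono : AdaptiveMonotone p f) (hsub : AdaptiveSubmodular p f)
    (q : Ωr → ℝ) (hq : ∀ ω, 0 ≤ q ω) (hq1 : ∑ ω : Ωr, q ω = 1)
    (q' : Ωr' → ℝ) (hq' : ∀ ω, 0 ≤ q' ω) (hq'1 : ∑ ω : Ωr', q' ω = 1)
    (Pag : Ωr → Policy E O) (Pstar : Ωr' → Policy E O)
    (r : ℕ) (hr : 0 < r) (α : ℕ → ℝ) (hα : ∀ i ∈ Finset.Icc 1 r, 0 ≤ α i ∧ α i ≤ 1)
    (hgreedy : ∀ i ∈ Finset.Icc 1 r, ∀ φ : E → O, ∀ ψ : PReal E O,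
      α i * maxMarginal p f ψ *
          (∑ ω ∈ Finset.univ.filter (fun ω : Ωr => runP (Pag ω) φ (i - 1) = ψ), q ω)
        ≤ ∑ ω ∈ Finset.univ.filter (fun ω : Ωr => runP (Pag ω) φ (i - 1) = ψ),
            q ω * marginal p f (Pag ω ψ) ψ) :
    (1 - Real.exp (-((1 / r : ℝ) * ∑ i ∈ Finset.Icc 1 r, α i))) *
        (∑ ω' : Ωr', q' ω' * favg p f (Pstar ω') r)
      ≤ ∑ ω : Ωr, q ω * favg p f (Pag ω) r := by
  have hO : Nonempty O := by
    by_contra h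
    rw [not_nonempty_iff] at h
    have hE : IsEmpty (E → O) := ⟨fun φ => h.false (φ (Classical.arbitrary E))⟩
    rw [Finset.univ_eq_empty, Finset.sum_empty] at hp1
    exact zero_ne_one hp1
  set A : ℕ → ℝ := fun n => ∑ ω : Ωr, q ω * favg p f (Pag ω) n with hA
  set B : ℝ := ∑ ω' : Ωr', q' ω' * favg p f (Pstar ω') r with hB
  set M : ℕ → ℝ := fun n =>
    ∑ ω : Ωr, q ω * (∑ φ : E → O, p φ * maxMarginal p f (runP (Pag ω) φ n)) with hM
  have hrpos : (0:ℝ) < r := by exact_mod_cast hr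
  have hMterm : ∀ (π : Policy E O) (n : ℕ),
      0 ≤ ∑ φ : E → O, p φ * maxMarginal p f (runP π φ n) := by
    intro π n
    apply Finset.sum_nonneg
    intro φ _
    rcases eq_or_lt_of_le (hp φ) with h0 | hpos
    · rw [← h0, zero_mul]
    · apply mul_nonneg (hp φ)
      apply maxMarginal_nonneg hmono
      calc (0:ℝ) < p φ := hpos
        _ ≤ prMass p (runP π φ n) := by
            apply Finset.single_le_sum (fun φ' _ => hp φ')
            simp only [Finset.mem_filter, Finset.mem_univ, true_and]
            exact runP_consistent π φ n
  have hM0 : ∀ n, 0 ≤ M n :=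
    fun n => Finset.sum_nonneg fun ω _ => mul_nonneg (hq ω) (hMterm _ n)
  have hBk : ∀ n, B ≤ A n + r * M n := by
    intro n
    have step1 : ∀ ω : Ωr, B ≤ favg p f (Pag ω) n
        + r * (∑ φ : E → O, p φ * maxMarginal p f (runP (Pag ω) φ n)) := by
      intro ω
      calc B = ∑ ω' : Ωr', q' ω' * favg p f (Pstar ω') r := hB
        _ ≤ ∑ ω' : Ωr', q' ω' * (favg p f (Pag ω) n
            + r * (∑ φ : E → O, p φ * maxMarginal p f (runP (Pag ω) φ n))) :=
          Finset.sum_le_sum fun ω' _ => mul_le_mul_of_nonneg_left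
            (keyB hp hmono hsub (Pag ω) (Pstar ω') n r) (hq' ω')
        _ = favg p f (Pag ω) n
            + r * (∑ φ : E → O, p φ * maxMarginal p f (runP (Pag ω) φ n)) := by
          rw [← Finset.sum_mul, hq'1, one_mul]
    calc B = ∑ ω : Ωr, q ω * B := by rw [← Finset.sum_mul, hq1, one_mul]
      _ ≤ ∑ ω : Ωr, q ω * (favg p f (Pag ω) n
          + r * (∑ φ : E → O, p φ * maxMarginal p f (runP (Pag ω) φ n))) :=
        Finset.sum_le_sum fun ω _ => mul_le_mul_of_nonneg_left (step1 ω) (hq ω)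
      _ = A n + r * M n := by
          rw [hA, hM]
          simp only [mul_add, Finset.sum_add_distrib, Finset.mul_sum]
          congr 1
          apply Finset.sum_congr rfl
          intro ω _
          apply Finset.sum_congr rfl
          intro φ _
          ring
  have hstep : ∀ i ∈ Finset.Icc 1 r, α i * M (i-1) ≤ A i - A (i-1) := by
    intro i hi
    have h1 : 1 ≤ i := (Finset.mem_Icc.mp hi).1
    have hg := gainGE hp f q hq Pag (i-1) (α i) (hgreedy i hi)
    rw [Nat.sub_add_cancel h1] at hg
    exact hg
  set c : ℕ → ℝ := fun i => 1 - α i / r with hc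
  have hcnn : ∀ i ∈ Finset.Icc 1 r, 0 ≤ c i ∧ c i ≤ Real.exp (-(α i / r)) := by
    intro i hi
    obtain ⟨h0, h1⟩ := hα i hi
    constructor
    · have hd : α i / r ≤ 1 := by
        rw [div_le_one hrpos]
        calc α i ≤ 1 := h1
          _ ≤ r := by exact_mod_cast hr
      simp only [hc]
      linarith
    · have := Real.add_one_le_exp (-(α i / r))
      simp only [hc]
      linarith
  have hDrec : ∀ i ∈ Finset.Icc 1 r, B - A i ≤ c i * (B - A (i-1)) := by
    intro i hi
    have hs := hstep i hi
    have hb := hBk (i-1)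
    have hα0 := (hα i hi).1
    have h2 : α i * ((B - A (i-1)) / r) ≤ α i * M (i-1) := by
      apply mul_le_mul_of_nonneg_left _ hα0
      rw [div_le_iff₀ hrpos]
      linarith
    have hring : c i * (B - A (i-1)) = B - A (i-1) - α i * ((B - A (i-1))/(r:ℝ)) := by
      simp only [hc]
      field_simp
    calc B - A i ≤ B - A (i-1) - α i * ((B - A (i-1))/(r:ℝ)) := by linarith
      _ = c i * (B - A (i-1)) := hring.symm
  have hprod : ∀ n, n ≤ r → B - A n ≤ (∏ i ∈ Finset.Icc 1 n, c i) * (B - A 0) := by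
    intro n
    induction n with
    | zero => intro _; simp
    | succ n ih =>
        intro hn
        have hn' : n ≤ r := le_trans (Nat.le_succ n) hn
        have hmem : n + 1 ∈ Finset.Icc 1 r :=
          Finset.mem_Icc.mpr ⟨Nat.succ_le_succ (Nat.zero_le n), hn⟩
        have h1 := hDrec (n+1) hmem
        rw [show (n+1) - 1 = n from rfl] at h1
        have hcn : 0 ≤ c (n+1) := (hcnn _ hmem).1
        calc B - A (n+1) ≤ c (n+1) * (B - A n) := h1
          _ ≤ c (n+1) * ((∏ i ∈ Finset.Icc 1 n, c i) * (B - A 0)) :=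
            mul_le_mul_of_nonneg_left (ih hn') hcn
          _ = (∏ i ∈ Finset.Icc 1 (n+1), c i) * (B - A 0) := by
              rw [Finset.prod_Icc_succ_top (Nat.succ_le_succ (Nat.zero_le n))]
              ring
  have hexp : (∏ i ∈ Finset.Icc 1 r, c i)
      ≤ Real.exp (-((1/(r:ℝ)) * ∑ i ∈ Finset.Icc 1 r, α i)) := by
    calc (∏ i ∈ Finset.Icc 1 r, c i) ≤ ∏ i ∈ Finset.Icc 1 r, Real.exp (-(α i / r)) :=
        Finset.prod_le_prod (fun i hi => (hcnn i hi).1) (fun i hi => (hcnn i hi).2)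
      _ = Real.exp (∑ i ∈ Finset.Icc 1 r, -(α i / r)) := (Real.exp_sum _ _).symm
      _ = Real.exp (-((1/(r:ℝ)) * ∑ i ∈ Finset.Icc 1 r, α i)) := by
          congr 1
          rw [Finset.sum_neg_distrib, ← Finset.sum_div, one_div, inv_mul_eq_div]
  have hA0 : 0 ≤ A 0 :=
    Finset.sum_nonneg fun ω _ => mul_nonneg (hq ω)
      (Finset.sum_nonneg fun φ _ => mul_nonneg (hp φ) (hf _ _))
  have hBnn : 0 ≤ B :=
    Finset.sum_nonneg fun ω' _ => mul_nonneg (hq' ω')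
      (Finset.sum_nonneg fun φ _ => mul_nonneg (hp φ) (hf _ _))
  have hAmono : A 0 ≤ A r := by
    have key : ∀ n, n ≤ r → A 0 ≤ A n := by
      intro n
      induction n with
      | zero => intro _; exact le_refl _
      | succ n ih =>
          intro hn
          have hn' : n ≤ r := le_trans (Nat.le_succ n) hn
          have hmem : n + 1 ∈ Finset.Icc 1 r :=
            Finset.mem_Icc.mpr ⟨Nat.succ_le_succ (Nat.zero_le n), hn⟩
          have h1 := hstep (n+1) hmem
          rw [show (n+1) - 1 = n from rfl] at h1
          have h2 : 0 ≤ α (n+1) * M n := mul_nonneg (hα _ hmem).1 (hM0 n)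
          linarith [ih hn']
    exact key r le_rfl
  set eterm : ℝ := Real.exp (-((1/(r:ℝ)) * ∑ i ∈ Finset.Icc 1 r, α i)) with he
  have hetnn : 0 ≤ eterm := le_of_lt (Real.exp_pos _)
  show (1 - eterm) * B ≤ A r
  by_cases hD0 : 0 ≤ B - A 0
  · have h1 : B - A r ≤ (∏ i ∈ Finset.Icc 1 r, c i) * (B - A 0) := hprod r le_rfl
    have h2 : (∏ i ∈ Finset.Icc 1 r, c i) * (B - A 0) ≤ eterm * (B - A 0) :=
      mul_le_mul_of_nonneg_right hexp hD0
    have h3 : eterm * (B - A 0) ≤ eterm * B := by nlinarith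
    have hring : (1 - eterm) * B = B - eterm * B := by ring
    linarith
  · push_neg at hD0
    have h1 : (1 - eterm) * B ≤ B := by nlinarith
    linarith
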